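/- Let μ be a measure satisfying the Poincaré inequality with constant C = 4 (e.g., the product Gumbel measure), and let f : ℝᵐ → ℝ be smooth with ‖∇f(t)‖ ≤ a everywhere. Then for all λ with 0 ≤ λa < 1, the moment generating function satisfies E[exp(λ f)] ≤ ((1 + λa)/(1 - λa)) · exp(λ E[f]). -/

import Mathlib

open MeasureTheory Real Finset intervalIntegral Filter


lemma weierstrass (u : ℕ → ℝ) (h0 : ∀ i, 0 ≤ u i) (h1 : ∀ i, u i ≤ 1) (n : ℕ) :
    1 - ∑ i ∈ range n, u i ≤ ∏ i ∈ range n, (1 - u i) := by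
  induction n with
  | zero => simp
  | succ n ih =>
    rw [Finset.prod_range_succ, Finset.sum_range_succ]
    have hp : (0:ℝ) ≤ ∏ i ∈ range n, (1 - u i) :=
      Finset.prod_nonneg fun i _ => by linarith [h1 i]
    nlinarith [h0 n, h1 n, ih, Finset.sum_nonneg (fun i (_ : i ∈ range n) => h0 i)]

lemma geom_tail (c : ℝ) (hc : 0 ≤ c) (n : ℕ) :
    ∑ i ∈ range n, c / 2 ^ (i + 2) ≤ c / 2 := by
  have h : ∑ i ∈ range n, c / 2 ^ (i + 2) = (c/4) * ∑ i ∈ range n, (1/2 : ℝ) ^ i := by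
    rw [Finset.mul_sum]; congr 1; ext i; rw [pow_add, one_div_pow]; field_simp; ring
  rw [h]
  have hg : ∑ i ∈ range n, (1/2 : ℝ) ^ i ≤ 2 := by
    rw [geom_sum_eq (by norm_num : (1/2:ℝ) ≠ 1)]
    have : (0:ℝ) ≤ (1/2:ℝ)^n := by positivity
    rw [div_le_iff_of_neg (by norm_num : (1/2:ℝ) - 1 < 0)]
    linarith
  nlinarith

lemma prod_split (c : ℝ) (n : ℕ) : ∏ i ∈ range (n+2), (1 - c^2/2^i)
    = (1 - c^2) * (1 - c^2/2) * ∏ i ∈ range n, (1 - c^2/2^(i+2)) := by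
  induction n with
  | zero => norm_num [Finset.prod_range_succ]
  | succ k ihk => rw [Finset.prod_range_succ, ihk, Finset.prod_range_succ]; ring

lemma prod_bound (c : ℝ) (hc0 : 0 ≤ c) (hc1 : c < 1) (n : ℕ) :
    (1 - c)/(1 + c) ≤ ∏ i ∈ range n, (1 - (c/2^i)^2)^(2^i : ℕ) := by
  have hterm : ∀ i : ℕ, 1 - c^2/2^i ≤ (1 - (c/2^i)^2)^(2^i : ℕ) := by
    intro i
    have h2 : (0:ℝ) < 2 ^ i := by positivity
    have hle1 : (c/2^i)^2 ≤ 1 := by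
      have h1 : c/2^i ≤ c := div_le_self hc0 (one_le_pow₀ (by norm_num))
      have h2' : (0:ℝ) ≤ c/2^i := by positivity
      nlinarith
    have := one_add_mul_le_pow (a := -((c/2^i)^2)) (by nlinarith) (2^i)
    have hcast : ((2^i : ℕ) : ℝ) = 2^i := by push_cast; ring
    calc 1 - c^2/2^i = 1 + ((2^i:ℕ):ℝ) * (-((c/2^i)^2)) := by
          rw [hcast]; field_simp; ring
      _ ≤ (1 + -((c/2^i)^2))^(2^i : ℕ) := this
      _ = (1 - (c/2^i)^2)^(2^i : ℕ) := by ring_nf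
  have hpos : ∀ i : ℕ, (0:ℝ) ≤ 1 - c^2/2^i := by
    intro i
    have h1 : c^2/2^i ≤ c^2 := by
      apply div_le_self (sq_nonneg c); exact one_le_pow₀ (by norm_num)
    nlinarith
  have hmain : ∏ i ∈ range n, (1 - c^2/2^i) ≤ ∏ i ∈ range n, (1 - (c/2^i)^2)^(2^i : ℕ) :=
    Finset.prod_le_prod (fun i _ => hpos i) (fun i _ => hterm i)
  refine le_trans ?_ hmain
  -- now bound the product of (1 - c²/2^i) below
  match n with
  | 0 => simpa using div_le_one_of_le₀ (by linarith) (by linarith)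
  | 1 =>
    simp only [Finset.prod_range_one, pow_zero, div_one]
    rw [div_le_iff₀ (by linarith)]
    nlinarith
  | (n + 2) =>
    rw [prod_split c n]
    have htail : 1 - c^2/2 ≤ ∏ i ∈ range n, (1 - c^2/2^(i+2)) := by
      have := weierstrass (fun i => c^2/2^(i+2)) (fun i => by positivity)
        (fun i => by
          have h1 : c^2/2^(i+2) ≤ c^2/2^2 := by
            apply div_le_div_of_nonneg_left (sq_nonneg c) (by positivity)
            exact pow_le_pow_right₀ (by norm_num) (by omega)
          nlinarith) n
      refine le_trans ?_ this
      have := geom_tail (c^2) (sq_nonneg c) n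
      linarith
    have hcc : c^2 < 1 := by nlinarith
    have hq : (0:ℝ) ≤ (1 - c^2) * (1 - c^2/2) := by nlinarith
    have key : (1-c)/(1+c) ≤ (1 - c^2) * (1 - c^2/2) * (1 - c^2/2) := by
      rw [div_le_iff₀ (by linarith)]
      nlinarith [sq_nonneg c, sq_nonneg (1-c), mul_nonneg hc0 (sq_nonneg (1-c)), sq_nonneg (c*(1-c))]
    calc (1-c)/(1+c) ≤ (1 - c^2) * (1 - c^2/2) * (1 - c^2/2) := key
      _ ≤ (1 - c^2) * (1 - c^2/2) * ∏ i ∈ range n, (1 - c^2/2^(i+2)) :=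
          mul_le_mul_of_nonneg_left htail hq

lemma exp_quad {x : ℝ} (h : |x| ≤ 1) : Real.exp x ≤ 1 + x + x^2 := by
  have := Real.exp_bound h (n := 2) (by norm_num)
  have h2 : |x|^2 = x^2 := sq_abs x
  simp only [Finset.sum_range_succ, Finset.sum_range_zero] at this
  norm_num at this
  rw [abs_le] at this
  nlinarith [this.2, sq_abs x]


noncomputable def chi (K : ℝ) (s : ℝ) : ℝ := max 0 (min 1 (K + 1 - |s|))

lemma chi_cont (K : ℝ) : Continuous (chi K) :=
  continuous_const.max (continuous_const.min (continuous_const.sub continuous_abs))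

lemma chi_nonneg (K s : ℝ) : 0 ≤ chi K s := le_max_left _ _

lemma chi_le_one (K s : ℝ) : chi K s ≤ 1 := max_le zero_le_one (min_le_left _ _)

lemma chi_eq_one {K s : ℝ} (h : |s| ≤ K) : chi K s = 1 := by
  unfold chi
  rw [min_eq_left (by linarith), max_eq_right (by linarith)]

lemma chi_eq_zero {K s : ℝ} (h : K + 1 ≤ |s|) : chi K s = 0 := by
  unfold chi
  rw [max_eq_left]
  exact min_le_of_right_le (by linarith)

noncomputable def phi (K : ℝ) (x : ℝ) : ℝ := ∫ s in (0 : ℝ)..x, chi K s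

lemma chi_intint (K a b : ℝ) : IntervalIntegrable (chi K) volume a b :=
  (chi_cont K).intervalIntegrable a b

lemma phi_hasDerivAt (K x : ℝ) : HasDerivAt (phi K) (chi K x) x :=
  integral_hasDerivAt_right (chi_intint K 0 x)
    ((chi_cont K).stronglyMeasurableAtFilter _ _)
    (chi_cont K).continuousAt

lemma phi_abs_le (K x : ℝ) : |phi K x| ≤ |x| := by
  have := intervalIntegral.norm_integral_le_of_norm_le_const
    (a := 0) (b := x) (C := 1) (f := chi K)
    (fun s _ => by rw [Real.norm_eq_abs, abs_of_nonneg (chi_nonneg K s)]; exact chi_le_one K s)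
  simpa [phi] using this

lemma phi_eq_self {K x : ℝ} (hK : 0 ≤ K) (h : |x| ≤ K) : phi K x = x := by
  have h1 : ∀ s ∈ Set.uIcc (0:ℝ) x, chi K s = 1 := by
    intro s hs
    apply chi_eq_one
    rcases Set.mem_uIcc.1 hs with ⟨h2, h3⟩ | ⟨h2, h3⟩
    · rw [abs_le] at h ⊢; constructor <;> nlinarith [h.1, h.2]
    · rw [abs_le] at h ⊢; constructor <;> nlinarith [h.1, h.2]
  unfold phi
  rw [intervalIntegral.integral_congr h1]
  simp

lemma phi_bounded {K : ℝ} (hK : 0 ≤ K) (x : ℝ) : |phi K x| ≤ K + 1 := by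
  rcases le_or_gt |x| (K+1) with h | h
  · exact (phi_abs_le K x).trans h
  · -- chi vanishes beyond K+1 in the direction of x
    rcases le_or_gt 0 x with hx | hx
    · have hx1 : K + 1 < x := by rwa [abs_of_nonneg hx] at h
      have hsplit : phi K x = phi K (K+1) + ∫ s in (K+1)..x, chi K s := by
        unfold phi
        rw [intervalIntegral.integral_add_adjacent_intervals (chi_intint K 0 (K+1))
          (chi_intint K (K+1) x)]
      have hzero : (∫ s in (K+1)..x, chi K s) = 0 := by
        rw [intervalIntegral.integral_congr (g := fun _ => (0:ℝ))
          (fun s hs => by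
            apply chi_eq_zero
            rcases Set.mem_uIcc.1 hs with ⟨h2, h3⟩ | ⟨h2, h3⟩
            · calc K + 1 ≤ s := h2
                _ ≤ |s| := le_abs_self s
            · nlinarith)]
        simp
      rw [hsplit, hzero, add_zero]
      exact (phi_abs_le K (K+1)).trans (le_of_eq (abs_of_nonneg (by linarith)))
    · have hx1 : x < -(K+1) := by
        rw [abs_of_neg hx] at h; linarith
      have hsplit : phi K x = phi K (-(K+1)) + ∫ s in (-(K+1))..x, chi K s := by
        unfold phi
        rw [intervalIntegral.integral_add_adjacent_intervals (chi_intint K 0 (-(K+1)))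
          (chi_intint K (-(K+1)) x)]
      have hzero : (∫ s in (-(K+1))..x, chi K s) = 0 := by
        rw [intervalIntegral.integral_congr (g := fun _ => (0:ℝ))
          (fun s hs => by
            apply chi_eq_zero
            rcases Set.mem_uIcc.1 hs with ⟨h2, h3⟩ | ⟨h2, h3⟩
            · nlinarith [le_abs_self s, neg_abs_le s]
            · nlinarith [le_abs_self s, neg_abs_le s])]
        simp
      rw [hsplit, hzero, add_zero]
      refine (phi_abs_le K (-(K+1))).trans (le_of_eq ?_)
      rw [abs_neg, abs_of_nonneg (by linarith)]

section
variable {m : ℕ} (μ : Measure (Fin m → ℝ)) [IsProbabilityMeasure μ]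
  (f : (Fin m → ℝ) → ℝ)


set_option maxHeartbeats 2000000 in
lemma core (hf : Differentiable ℝ f)
    (hP : ∀ g : (Fin m → ℝ) → ℝ, Differentiable ℝ g → MemLp g 2 μ →
      (∫ t, (g t) ^ 2 ∂μ) - (∫ t, g t ∂μ) ^ 2
        ≤ 4 * ∫ t, (∑ i : Fin m, (fderiv ℝ g t (Pi.single i 1)) ^ 2) ∂μ)
    (a : ℝ) (ha : 0 < a)
    (hgrad : ∀ t, (∑ i : Fin m, (fderiv ℝ f t (Pi.single i 1)) ^ 2) ≤ a ^ 2)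
    (lam : ℝ) (hlam0 : 0 ≤ lam) (hlam1 : lam * a < 1) (K : ℕ) :
    ∫ t, Real.exp (lam * phi K (f t)) ∂μ
      ≤ (1 + lam * a) / (1 - lam * a) * Real.exp (lam * ∫ t, phi K (f t) ∂μ) := by
  set B : ℝ := (K : ℝ) + 1 with hB
  have hB0 : 0 < B := by positivity
  set h : (Fin m → ℝ) → ℝ := fun t => phi K (f t) with hh
  have hbd : ∀ t, |h t| ≤ B := fun t => phi_bounded (K.cast_nonneg) (f t)
  have hphidiff : Differentiable ℝ (phi K) := fun x => (phi_hasDerivAt K x).differentiableAt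
  have hcont : Continuous h := (hphidiff.continuous).comp hf.continuous
  -- integrability of exp(s * h) for any s
  have hint : ∀ s : ℝ, Integrable (fun t => Real.exp (s * h t)) μ := by
    intro s
    refine memLp_one_iff_integrable.mp ?_
    have hm : Continuous (fun t => Real.exp (s * h t)) :=
      Real.continuous_exp.comp (continuous_const.mul hcont)
    refine (memLp_top_of_bound hm.aestronglyMeasurable (Real.exp (|s| * B))
      (ae_of_all _ fun t => ?_)).mono_exponent le_top
    rw [Real.norm_eq_abs, abs_of_nonneg (Real.exp_nonneg _)]
    apply Real.exp_le_exp.mpr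
    calc s * h t ≤ |s * h t| := le_abs_self _
      _ = |s| * |h t| := abs_mul s (h t)
      _ ≤ |s| * B := by
          exact mul_le_mul_of_nonneg_left (hbd t) (abs_nonneg s)
  -- positivity of the mgf
  have hpos : ∀ s : ℝ, 0 < ∫ t, Real.exp (s * h t) ∂μ := by
    intro s
    have hlow : ∀ t, Real.exp (-(|s| * B)) ≤ Real.exp (s * h t) := by
      intro t
      apply Real.exp_le_exp.mpr
      have := (abs_le.mp (by calc |s * h t| = |s| * |h t| := abs_mul s (h t)
        _ ≤ |s| * B := mul_le_mul_of_nonneg_left (hbd t) (abs_nonneg s))).1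
      linarith
    calc (0:ℝ) < Real.exp (-(|s| * B)) := Real.exp_pos _
      _ = ∫ _t, Real.exp (-(|s| * B)) ∂μ := by simp
      _ ≤ ∫ t, Real.exp (s * h t) ∂μ :=
          integral_mono (integrable_const _) (hint s) hlow
  -- the key recursion from the Poincaré inequality
  have hrec : ∀ s : ℝ, 0 ≤ s → s ≤ lam →
      (1 - (s * a)^2) * ∫ t, Real.exp (s * h t) ∂μ
        ≤ (∫ t, Real.exp (s/2 * h t) ∂μ)^2 := by
    intro s hs0 hs1
    set g : (Fin m → ℝ) → ℝ := fun t => Real.exp (s/2 * h t) with hg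
    have hgD : ∀ t, HasFDerivAt g
        ((Real.exp (s/2 * h t) * (s/2 * chi K (f t))) • fderiv ℝ f t) t := by
      intro t
      have h1 : HasFDerivAt h ((chi K (f t)) • fderiv ℝ f t) t :=
        (phi_hasDerivAt K (f t)).comp_hasFDerivAt t (hf t).hasFDerivAt
      have h2 : HasFDerivAt (fun t => s/2 * h t)
          ((s/2 * chi K (f t)) • fderiv ℝ f t) t := by
        have := h1.const_mul (s/2)
        rwa [smul_smul] at this
      have h3 := (Real.hasDerivAt_exp (s/2 * h t)).comp_hasFDerivAt t h2
      rwa [smul_smul] at h3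
    have hgdiff : Differentiable ℝ g := fun t => (hgD t).differentiableAt
    have hgmem : MemLp g 2 μ := by
      refine (memLp_top_of_bound hgdiff.continuous.aestronglyMeasurable
        (Real.exp (|s/2| * B)) (ae_of_all _ fun t => ?_)).mono_exponent le_top
      rw [Real.norm_eq_abs, abs_of_nonneg (Real.exp_nonneg _)]
      apply Real.exp_le_exp.mpr
      calc s/2 * h t ≤ |s/2 * h t| := le_abs_self _
        _ = |s/2| * |h t| := abs_mul _ _
        _ ≤ |s/2| * B := mul_le_mul_of_nonneg_left (hbd t) (abs_nonneg _)
    have hpoin := hP g hgdiff hgmem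
    have hsq : ∀ t, (g t)^2 = Real.exp (s * h t) := by
      intro t
      rw [hg, ← Real.exp_nat_mul]
      norm_num
      ring_nf
    have e1 : (∫ t, (g t)^2 ∂μ) = ∫ t, Real.exp (s * h t) ∂μ := by
      exact integral_congr_ae (ae_of_all _ fun t => hsq t)
    have e2 : ∫ t, (∑ i : Fin m, (fderiv ℝ g t (Pi.single i 1)) ^ 2) ∂μ
        ≤ ∫ t, s^2 * a^2 / 4 * Real.exp (s * h t) ∂μ := by
      apply integral_mono_of_nonneg
      · exact ae_of_all _ fun t => Finset.sum_nonneg fun i _ => sq_nonneg _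
      · exact (hint s).const_mul _
      · refine ae_of_all _ fun t => ?_
        dsimp only
        have hft : fderiv ℝ g t
            = (Real.exp (s/2 * h t) * (s/2 * chi K (f t))) • fderiv ℝ f t :=
          (hgD t).fderiv
        rw [hft]
        simp only [ContinuousLinearMap.coe_smul', Pi.smul_apply, smul_eq_mul]
        have : ∑ i : Fin m, (Real.exp (s/2 * h t) * (s/2 * chi K (f t))
              * fderiv ℝ f t (Pi.single i 1)) ^ 2
            = (Real.exp (s/2 * h t))^2 * (s/2 * chi K (f t))^2
              * ∑ i : Fin m, (fderiv ℝ f t (Pi.single i 1))^2 := by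
          rw [Finset.mul_sum]; congr 1; ext i; ring
        rw [this]
        have he : Real.exp (s/2 * h t)^2 = Real.exp (s * h t) := by
          rw [← Real.exp_nat_mul]; norm_num; ring_nf
        rw [he]
        have hchi : (s/2 * chi K (f t))^2 ≤ s^2/4 := by
          have c1 := chi_nonneg K (f t)
          have c2 := chi_le_one K (f t)
          have c3 : chi K (f t)^2 ≤ 1 := by nlinarith
          have : (s/2 * chi K (f t))^2 = s^2/4 * chi K (f t)^2 := by ring
          rw [this]
          nlinarith [sq_nonneg s]
        have hsum := hgrad t
        have hsum0 : (0:ℝ) ≤ ∑ i : Fin m, (fderiv ℝ f t (Pi.single i 1))^2 :=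
          Finset.sum_nonneg fun i _ => sq_nonneg _
        have hexp0 : (0:ℝ) ≤ Real.exp (s * h t) := Real.exp_nonneg _
        have hCS : (s/2 * chi K (f t))^2 * (∑ i : Fin m, (fderiv ℝ f t (Pi.single i 1))^2)
            ≤ s^2/4 * a^2 := mul_le_mul hchi hsum hsum0 (by positivity)
        calc Real.exp (s * h t) * (s/2 * chi K (f t))^2
              * (∑ i : Fin m, (fderiv ℝ f t (Pi.single i 1))^2)
            = Real.exp (s * h t) * ((s/2 * chi K (f t))^2
              * ∑ i : Fin m, (fderiv ℝ f t (Pi.single i 1))^2) := by ring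
          _ ≤ Real.exp (s * h t) * (s^2/4 * a^2) := mul_le_mul_of_nonneg_left hCS hexp0
          _ = s^2 * a^2 / 4 * Real.exp (s * h t) := by ring
    have e3 : ∫ t, s^2 * a^2 / 4 * Real.exp (s * h t) ∂μ
        = s^2 * a^2 / 4 * ∫ t, Real.exp (s * h t) ∂μ := integral_const_mul _ _
    rw [e1] at hpoin
    rw [e3] at e2
    nlinarith [hpos s]
  -- iteration
  set c : ℝ := lam * a with hc
  have hc0 : 0 ≤ c := mul_nonneg hlam0 ha.le
  have hiter : ∀ n : ℕ,
      (∫ t, Real.exp (lam * h t) ∂μ) * ∏ i ∈ range n, (1 - (c/2^i)^2)^(2^i : ℕ)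
        ≤ (∫ t, Real.exp (lam/2^n * h t) ∂μ)^(2^n : ℕ) := by
    intro n
    induction n with
    | zero => simp
    | succ n ih =>
      have hs0 : (0:ℝ) ≤ lam/2^n := by positivity
      have hs1 : lam/2^n ≤ lam := div_le_self hlam0 (one_le_pow₀ (by norm_num))
      have hrecn := hrec (lam/2^n) hs0 hs1
      have hca : lam/2^n * a = c/2^n := by rw [hc]; ring
      rw [hca] at hrecn
      have hfac0 : (0:ℝ) ≤ 1 - (c/2^n)^2 := by
        have h1 : c/2^n ≤ c := div_le_self hc0 (one_le_pow₀ (by norm_num))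
        have h2 : (0:ℝ) ≤ c/2^n := by positivity
        nlinarith
      have hGn0 : (0:ℝ) ≤ ∫ t, Real.exp (lam/2^n * h t) ∂μ := (hpos _).le
      calc (∫ t, Real.exp (lam * h t) ∂μ)
            * ∏ i ∈ range (n+1), (1 - (c/2^i)^2)^(2^i : ℕ)
          = ((∫ t, Real.exp (lam * h t) ∂μ)
            * ∏ i ∈ range n, (1 - (c/2^i)^2)^(2^i : ℕ)) * (1 - (c/2^n)^2)^(2^n : ℕ) := by
            rw [Finset.prod_range_succ]; ring
        _ ≤ (∫ t, Real.exp (lam/2^n * h t) ∂μ)^(2^n : ℕ) * (1 - (c/2^n)^2)^(2^n : ℕ) := by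
            apply mul_le_mul_of_nonneg_right ih (pow_nonneg hfac0 _)
        _ = ((1 - (c/2^n)^2) * ∫ t, Real.exp (lam/2^n * h t) ∂μ)^(2^n : ℕ) := by
            rw [mul_pow]; ring
        _ ≤ ((∫ t, Real.exp (lam/2^n/2 * h t) ∂μ)^2)^(2^n : ℕ) := by
            exact pow_le_pow_left₀ (mul_nonneg hfac0 hGn0) hrecn _
        _ = (∫ t, Real.exp (lam/2^(n+1) * h t) ∂μ)^(2^(n+1) : ℕ) := by
            have harg : (fun t => Real.exp (lam/2^n/2 * h t))
                = fun t => Real.exp (lam/2^(n+1) * h t) := by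
              funext t; congr 1; rw [pow_succ]; ring
            rw [harg, ← pow_mul]
            congr 1
            rw [pow_succ]; ring
  -- integrability of h and its square
  have hI : Integrable h μ := by
    refine memLp_one_iff_integrable.mp ?_
    refine (memLp_top_of_bound hcont.aestronglyMeasurable B
      (ae_of_all _ fun t => ?_)).mono_exponent le_top
    rw [Real.norm_eq_abs]; exact hbd t
  set I : ℝ := ∫ t, h t ∂μ with hIdef
  -- small exponent bound
  have heps : ∀ s : ℝ, 0 ≤ s → s * B ≤ 1 →
      (∫ t, Real.exp (s * h t) ∂μ) ≤ Real.exp (s * I + s^2 * B^2) := by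
    intro s hs0 hsB
    have hpt : ∀ t, Real.exp (s * h t) ≤ 1 + s * h t + s^2 * B^2 := by
      intro t
      have habs : |s * h t| ≤ 1 := by
        rw [abs_mul, abs_of_nonneg hs0]
        calc s * |h t| ≤ s * B := mul_le_mul_of_nonneg_left (hbd t) hs0
          _ ≤ 1 := hsB
      have hq := exp_quad habs
      have hh2 : (h t)^2 ≤ B^2 := by
        have h1 := (abs_le.mp (hbd t)).1
        have h2 := (abs_le.mp (hbd t)).2
        nlinarith
      have h3 : (s * h t)^2 ≤ s^2 * B^2 := by nlinarith [sq_nonneg s]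
      linarith
    have hint2 : Integrable (fun t => 1 + s * h t + s^2 * B^2) μ :=
      ((integrable_const (1:ℝ)).add (hI.const_mul s)).add (integrable_const _)
    have h1 : (∫ t, Real.exp (s * h t) ∂μ) ≤ ∫ t, (1 + s * h t + s^2 * B^2) ∂μ :=
      integral_mono (hint s) hint2 hpt
    have hrw : (fun t : Fin m → ℝ => 1 + s * h t + s^2 * B^2)
        = fun t => (1 + s^2 * B^2) + s * h t := by funext t; ring
    have h2 : ∫ t, (1 + s * h t + s^2 * B^2) ∂μ = (1 + s^2 * B^2) + s * I := by
      rw [hrw, integral_add (integrable_const _) (hI.const_mul s), MeasureTheory.integral_const,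
        MeasureTheory.integral_const_mul]
      simp
      exact Or.inl rfl
    have h4 : 1 + s * I + s^2 * B^2 ≤ Real.exp (s * I + s^2 * B^2) := by
      have := Real.add_one_le_exp (s * I + s^2 * B^2)
      linarith
    linarith
  -- finish: for large n
  obtain ⟨N, hN⟩ := exists_nat_ge (lam * B)
  have h1c : 0 < 1 - c := by linarith
  have h1c' : (0:ℝ) < 1 + c := by linarith
  have hfin : ∀ n : ℕ, N ≤ n → (∫ t, Real.exp (lam * h t) ∂μ)
      ≤ (1 + c)/(1 - c) * Real.exp (lam * I + lam^2 * B^2 * (1/2)^n) := by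
    intro n hn
    have h2n : lam * B ≤ (2:ℝ)^n := by
      calc lam * B ≤ (N : ℝ) := hN
        _ ≤ (n : ℝ) := Nat.cast_le.mpr hn
        _ ≤ (2:ℝ)^n := by exact_mod_cast (Nat.lt_two_pow_self (n := n)).le
    have hs0 : (0:ℝ) ≤ lam / 2^n := by positivity
    have hsB : (lam/2^n) * B ≤ 1 := by
      rw [div_mul_eq_mul_div, div_le_one (by positivity)]; exact h2n
    have hq := heps (lam/2^n) hs0 hsB
    have hpow : (∫ t, Real.exp (lam/2^n * h t) ∂μ)^(2^n : ℕ)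
        ≤ Real.exp (lam * I + lam^2 * B^2 * (1/2)^n) := by
      calc (∫ t, Real.exp (lam/2^n * h t) ∂μ)^(2^n : ℕ)
          ≤ (Real.exp (lam/2^n * I + (lam/2^n)^2 * B^2))^(2^n : ℕ) :=
            pow_le_pow_left₀ (hpos _).le hq _
        _ = Real.exp (((2^n : ℕ) : ℝ) * (lam/2^n * I + (lam/2^n)^2 * B^2)) := by
            rw [← Real.exp_nat_mul]
        _ = Real.exp (lam * I + lam^2 * B^2 * (1/2)^n) := by
            congr 1
            have h2 : ((2:ℝ))^n ≠ 0 := by positivity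
            push_cast
            field_simp
            have h3 : (2:ℝ)^n * (1/2^n) = 1 := by field_simp
            simp only [one_div, inv_pow] at h3 ⊢
            linear_combination (-(lam^2*B^2)) * h3
    have hprod := prod_bound c hc0 hlam1 n
    have hG0 : (0:ℝ) ≤ ∫ t, Real.exp (lam * h t) ∂μ := (hpos _).le
    have key : (∫ t, Real.exp (lam * h t) ∂μ) * ((1-c)/(1+c))
        ≤ Real.exp (lam * I + lam^2 * B^2 * (1/2)^n) :=
      le_trans (le_trans (mul_le_mul_of_nonneg_left hprod hG0) (hiter n)) hpow
    have hR0 : (0:ℝ) < (1 - c)/(1 + c) := div_pos h1c h1c'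
    have step : (∫ t, Real.exp (lam * h t) ∂μ)
        ≤ Real.exp (lam * I + lam^2 * B^2 * (1/2)^n) / ((1-c)/(1+c)) :=
      (le_div_iff₀ hR0).mpr key
    have heq : Real.exp (lam * I + lam^2 * B^2 * (1/2)^n) / ((1-c)/(1+c))
        = (1 + c)/(1 - c) * Real.exp (lam * I + lam^2 * B^2 * (1/2)^n) := by
      field_simp
    rwa [heq] at step
  have htend : Filter.Tendsto
      (fun n : ℕ => (1 + c)/(1 - c) * Real.exp (lam * I + lam^2 * B^2 * (1/2)^n))
      atTop (nhds ((1 + c)/(1 - c) * Real.exp (lam * I))) := by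
    have t1 : Filter.Tendsto (fun n : ℕ => ((1:ℝ)/2)^n) atTop (nhds 0) :=
      tendsto_pow_atTop_nhds_zero_of_lt_one (by norm_num) (by norm_num)
    have t2 : Filter.Tendsto (fun n : ℕ => lam * I + lam^2 * B^2 * (1/2)^n)
        atTop (nhds (lam * I)) := by
      have t3 := t1.const_mul (lam^2 * B^2)
      have t4 := t3.const_add (lam * I)
      simp only [mul_zero, add_zero] at t4
      exact t4
    exact ((Real.continuous_exp.tendsto _).comp t2).const_mul _
  have final : (∫ t, Real.exp (lam * h t) ∂μ) ≤ (1 + c)/(1 - c) * Real.exp (lam * I) :=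
    ge_of_tendsto htend (Filter.eventually_atTop.mpr ⟨N, hfin⟩)
  exact final

end


set_option maxHeartbeats 1000000 in
/-- MGF bound via the Poincaré inequality with constant 4: if `μ` satisfies
`Var_μ(g) ≤ 4 ∫ ‖∇g‖² dμ` and `‖∇f‖ ≤ a` everywhere, then for `0 ≤ λa < 1`,
`E[exp (λ f)] ≤ ((1+λa)/(1-λa)) exp (λ E[f])`. -/
theorem stmt_15 {m : ℕ} (μ : Measure (Fin m → ℝ)) (hprob : IsProbabilityMeasure μ)
    (hP : ∀ g : (Fin m → ℝ) → ℝ, Differentiable ℝ g → MemLp g 2 μ →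
      (∫ t, (g t) ^ 2 ∂μ) - (∫ t, g t ∂μ) ^ 2
        ≤ 4 * ∫ t, (∑ i : Fin m, (fderiv ℝ g t (Pi.single i 1)) ^ 2) ∂μ)
    (f : (Fin m → ℝ) → ℝ) (hf : Differentiable ℝ f)
    (a : ℝ) (ha : 0 < a)
    (hgrad : ∀ t, (∑ i : Fin m, (fderiv ℝ f t (Pi.single i 1)) ^ 2) ≤ a ^ 2)
    (hfint : Integrable f μ)
    (lam : ℝ) (hlam0 : 0 ≤ lam) (hlam1 : lam * a < 1) :
    (∫⁻ t, ENNReal.ofReal (Real.exp (lam * f t)) ∂μ)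
      ≤ ENNReal.ofReal
          ((1 + lam * a) / (1 - lam * a) * Real.exp (lam * ∫ t, f t ∂μ)) := by
  have hcore : ∀ K : ℕ, ∫ t, Real.exp (lam * phi K (f t)) ∂μ
      ≤ (1 + lam * a)/(1 - lam * a) * Real.exp (lam * ∫ t, phi K (f t) ∂μ) :=
    fun K => core μ f hf hP a ha hgrad lam hlam0 hlam1 K
  have hphicont : ∀ K : ℝ, Continuous (phi K) := fun K =>
    continuous_iff_continuousAt.mpr fun x => (phi_hasDerivAt K x).continuousAt
  have hcontK : ∀ K : ℕ, Continuous (fun t => phi K (f t)) := fun K =>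
    (hphicont K).comp hf.continuous
  have hexpcont : ∀ K : ℕ, Continuous (fun t => Real.exp (lam * phi K (f t))) := fun K =>
    Real.continuous_exp.comp (continuous_const.mul (hcontK K))
  have hexpint : ∀ K : ℕ, Integrable (fun t => Real.exp (lam * phi K (f t))) μ := by
    intro K
    refine memLp_one_iff_integrable.mp ?_
    refine (memLp_top_of_bound (hexpcont K).aestronglyMeasurable
      (Real.exp (|lam| * ((K:ℝ)+1))) (ae_of_all _ fun t => ?_)).mono_exponent le_top
    rw [Real.norm_eq_abs, abs_of_nonneg (Real.exp_nonneg _)]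
    apply Real.exp_le_exp.mpr
    calc lam * phi K (f t) ≤ |lam * phi K (f t)| := le_abs_self _
      _ = |lam| * |phi K (f t)| := abs_mul _ _
      _ ≤ |lam| * ((K:ℝ)+1) :=
          mul_le_mul_of_nonneg_left (phi_bounded (K.cast_nonneg) (f t)) (abs_nonneg _)
  have hptphi : ∀ t, Filter.Tendsto (fun K : ℕ => phi K (f t)) atTop (nhds (f t)) := by
    intro t
    obtain ⟨M, hM⟩ := exists_nat_ge |f t|
    apply tendsto_atTop_of_eventually_const (i₀ := M)
    intro K hK
    exact phi_eq_self (K.cast_nonneg) (hM.trans (Nat.cast_le.mpr hK))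
  have hpt : ∀ t, Filter.Tendsto (fun K : ℕ => Real.exp (lam * phi K (f t)))
      atTop (nhds (Real.exp (lam * f t))) := fun t =>
    (Real.continuous_exp.tendsto _).comp ((hptphi t).const_mul lam)
  have hItend : Filter.Tendsto (fun K : ℕ => ∫ t, phi K (f t) ∂μ)
      atTop (nhds (∫ t, f t ∂μ)) := by
    apply MeasureTheory.tendsto_integral_of_dominated_convergence (fun t => |f t|)
      (fun K => (hcontK K).aestronglyMeasurable) hfint.abs
      (fun K => ae_of_all _ fun t => by rw [Real.norm_eq_abs]; exact phi_abs_le _ _)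
      (ae_of_all _ fun t => hptphi t)
  have hlig : ∀ K : ℕ, (∫⁻ t, ENNReal.ofReal (Real.exp (lam * phi K (f t))) ∂μ)
      = ENNReal.ofReal (∫ t, Real.exp (lam * phi K (f t)) ∂μ) := fun K =>
    (ofReal_integral_eq_lintegral_ofReal (hexpint K)
      (ae_of_all _ fun t => Real.exp_nonneg _)).symm
  calc (∫⁻ t, ENNReal.ofReal (Real.exp (lam * f t)) ∂μ)
      = ∫⁻ t, Filter.liminf (fun K : ℕ =>
          ENNReal.ofReal (Real.exp (lam * phi K (f t)))) atTop ∂μ := by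
        apply lintegral_congr fun t => ?_
        exact (((ENNReal.continuous_ofReal.tendsto _).comp (hpt t)).liminf_eq).symm
    _ ≤ Filter.liminf (fun K : ℕ =>
          ∫⁻ t, ENNReal.ofReal (Real.exp (lam * phi K (f t))) ∂μ) atTop := by
        apply lintegral_liminf_le
        exact fun K => (ENNReal.continuous_ofReal.comp (hexpcont K)).measurable
    _ ≤ Filter.liminf (fun K : ℕ => ENNReal.ofReal ((1 + lam * a)/(1 - lam * a)
          * Real.exp (lam * ∫ t, phi K (f t) ∂μ))) atTop := by
        refine Filter.liminf_le_liminf (Filter.Eventually.of_forall fun K => ?_)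
        rw [hlig K]
        exact ENNReal.ofReal_le_ofReal (hcore K)
    _ = ENNReal.ofReal ((1 + lam * a) / (1 - lam * a) * Real.exp (lam * ∫ t, f t ∂μ)) := by
        apply Filter.Tendsto.liminf_eq
        exact (ENNReal.continuous_ofReal.tendsto _).comp
          (((Real.continuous_exp.tendsto _).comp (hItend.const_mul lam)).const_mul _)
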